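/- Let (Ω, P) be a probability space, let C ∈ ℝ, and let (X_n) be a sequence of integrable real random variables. Suppose that for every bounded continuous function f : ℝ → ℝ, ∫ f(X_n(ω)) · (X_n(ω) − C) dP(ω) → 0 as n → ∞. Then X_n converges to the constant C in probability: for every ε > 0, P(|X_n − C| ≥ ε) → 0. -/

import Mathlib

open MeasureTheory Filter

/-- **Lemma F.4**: if `E[f(Xₙ)(Xₙ − C)] → 0` for every bounded continuous `f`, then
`Xₙ → C` in probability. -/
theorem tendsto_in_measure_of_bcf_test
    {Ω : Type*} [MeasurableSpace Ω] (P : Measure Ω) [IsProbabilityMeasure P]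
    (C : ℝ) (X : ℕ → Ω → ℝ)
    (hXmeas : ∀ n, Measurable (X n))
    (hXint : ∀ n, Integrable (X n) P)
    (h : ∀ f : BoundedContinuousFunction ℝ ℝ,
      Tendsto (fun n => ∫ ω, f (X n ω) * (X n ω - C) ∂P) atTop (nhds 0)) :
    TendstoInMeasure P X atTop (fun _ => C) := by
  rw [tendstoInMeasure_iff_dist]
  intro ε hε
  -- test function: clamp of (x - C) to [-1, 1]
  have fcont : Continuous fun x : ℝ => max (-1) (min 1 (x - C)) :=
    continuous_const.max (continuous_const.min (continuous_id.sub continuous_const))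
  set f : BoundedContinuousFunction ℝ ℝ :=
    BoundedContinuousFunction.ofNormedAddCommGroup _ fcont 1 (by
      intro x
      rw [Real.norm_eq_abs, abs_le]
      constructor
      · exact le_max_left _ _
      · exact max_le (by norm_num) ((min_le_left _ _)) ) with hf
  have hfx : ∀ x : ℝ, f x = max (-1) (min 1 (x - C)) := fun x => rfl
  set c : ℝ := ε * min ε 1 with hcdef
  have hc : 0 < c := mul_pos hε (lt_min hε one_pos)
  -- pointwise: f x * (x - C) ≥ 0, and ≥ c on |x - C| ≥ ε
  have hnonneg : ∀ x : ℝ, 0 ≤ f x * (x - C) := by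
    intro x
    rw [hfx]
    rcases le_or_gt 0 (x - C) with ht | ht
    · exact mul_nonneg (le_max_of_le_right (le_min one_pos.le ht)) ht
    · have h1 : max (-1) (min 1 (x - C)) ≤ 0 :=
        max_le (by norm_num) ((min_le_right _ _).trans ht.le)
      nlinarith [h1, ht]
  have hge : ∀ x : ℝ, ε ≤ |x - C| → c ≤ f x * (x - C) := by
    intro x hx
    rw [hfx]
    rcases le_or_gt 0 (x - C) with ht | ht
    · rw [abs_of_nonneg ht] at hx
      have h1 : min ε 1 ≤ min 1 (x - C) := by
        rcases le_total ε 1 with h2 | h2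
        · rw [min_eq_left h2]; exact le_min h2 hx
        · rw [min_eq_right h2]; exact le_min le_rfl (h2.trans hx)
      have h1' : min ε 1 ≤ max (-1) (min 1 (x - C)) := h1.trans (le_max_right _ _)
      calc c = min ε 1 * ε := mul_comm _ _
        _ ≤ max (-1) (min 1 (x - C)) * (x - C) := by
            apply mul_le_mul h1' (hx.trans le_rfl) hε.le
            exact le_trans (lt_min hε one_pos).le h1'
    · rw [abs_of_neg ht] at hx
      -- x - C ≤ -ε
      have hxle : x - C ≤ -ε := by linarith
      have h1 : max (-1) (x - C) ≤ -min ε 1 := by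
        rcases le_total ε 1 with h2 | h2
        · rw [min_eq_left h2]
          exact max_le (by linarith) (by linarith)
        · rw [min_eq_right h2]
          exact max_le le_rfl (by linarith)
      have hmin : min 1 (x - C) = x - C := min_eq_right (by linarith)
      rw [hmin]
      have hmpos : 0 < min ε 1 := lt_min hε one_pos
      nlinarith [h1, hxle, hmpos]
  -- Markov bound
  have hgm : ∀ n, Integrable (fun ω => f (X n ω) * (X n ω - C)) P := by
    intro n
    exact Integrable.bdd_mul ((hXint n).sub (integrable_const C))
      ((f.continuous.measurable.comp (hXmeas n)).aestronglyMeasurable)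
      (c := ‖f‖) (ae_of_all _ fun x => f.norm_coe_le_norm _)
  have hbound : ∀ n, (P {ω | ε ≤ dist (X n ω) C}).toReal ≤
      (∫ ω, f (X n ω) * (X n ω - C) ∂P) / c := by
    intro n
    rw [le_div_iff₀ hc, mul_comm]
    refine le_trans ?_ (mul_meas_ge_le_integral_of_nonneg (ae_of_all _ fun ω => hnonneg _) (hgm n) c)
    apply mul_le_mul_of_nonneg_left _ hc.le
    apply ENNReal.toReal_mono
    · exact (measure_lt_top _ _).ne
    · apply measure_mono
      intro ω hω
      exact hge _ (by simpa [Real.dist_eq] using hω)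
  -- conclude
  have hne : ∀ n, P {ω | ε ≤ dist (X n ω) C} ≠ ⊤ := fun n => (measure_lt_top _ _).ne
  rw [← ENNReal.tendsto_toReal_iff hne ENNReal.zero_ne_top]
  simp only [ENNReal.toReal_zero]
  have hup : Tendsto (fun n => (∫ ω, f (X n ω) * (X n ω - C) ∂P) / c) atTop (nhds 0) := by
    simpa using (h f).div_const c
  exact tendsto_of_tendsto_of_tendsto_of_le_of_le tendsto_const_nhds hup
    (fun n => ENNReal.toReal_nonneg) hbound
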